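/- In the abstract game G^M_w, the initial state s₀ belongs to Eve's winning region if and only if w ∈ L(M), i.e., iff the computation of M on w reaches an accepting configuration. -/

import Mathlib

/-- A reachability game: states `V`, Eve's states, transition relation, target set. -/
structure RGame (V : Type) where
  eve : Set V
  trans : V → V → Prop
  target : Set V

open Classical in
/-- The transfinite attractor stages: `W 0 = target`; for `o > 0`, a state not in
`W_{<o}` is added if it is Eve's with a transition into `W_{<o}`, or Adam's with a
nonempty successor set contained in `W_{<o}`. -/
noncomputable def RGame.W {V : Type} (g : RGame V) (o : Ordinal.{0}) : Set V :=
  if o = 0 then g.target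
  else
    let Wlt : Set V := ⋃ o' : {x : Ordinal.{0} // x < o}, g.W o'.1
    {s | s ∉ Wlt ∧
      ((s ∈ g.eve ∧ ∃ t, g.trans s t ∧ t ∈ Wlt) ∨
       (s ∉ g.eve ∧ (∃ t, g.trans s t) ∧ ∀ t, g.trans s t → t ∈ Wlt))}
termination_by o
decreasing_by exact o'.2

/-- Eve's winning region: the union of all attractor stages. -/
noncomputable def RGame.WinE {V : Type} (g : RGame V) : Set V := ⋃ o : Ordinal.{0}, g.W o
/-- A deterministic Turing machine; the direction `Bool` encodes `+1` (`true`) or `-1` (`false`). -/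
structure TM where
  Q : Type
  Γ : Type
  q0 : Q
  qacc : Q
  qrej : Q
  blank : Γ
  δ : Q → Γ → Q × Γ × Bool

/-- The extended tape alphabet Δ = Γ ∪ (Q × Γ). -/
def TM.Sym (M : TM) : Type := M.Γ ⊕ (M.Q × M.Γ)

def TM.isFinalState (M : TM) (q : M.Q) : Prop := q = M.qacc ∨ q = M.qrej

/-- The local one-step relation ⊢ ⊆ Δ³ × Δ of the tableau construction;
it is undefined on triples whose head symbol carries a final state. -/
inductive TM.Yields (M : TM) : M.Sym × M.Sym × M.Sym → M.Sym → Prop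
  | headLeftR {q x y z q' x'} (hq : ¬ M.isFinalState q) (h : M.δ q x = (q', x', true)) :
      M.Yields (Sum.inr (q, x), Sum.inl y, Sum.inl z) (Sum.inr (q', y))
  | headLeftL {q x y z q' x'} (hq : ¬ M.isFinalState q) (h : M.δ q x = (q', x', false)) :
      M.Yields (Sum.inr (q, x), Sum.inl y, Sum.inl z) (Sum.inl y)
  | headMid {x q y z q' y' d} (hq : ¬ M.isFinalState q) (h : M.δ q y = (q', y', d)) :
      M.Yields (Sum.inl x, Sum.inr (q, y), Sum.inl z) (Sum.inl y')
  | headRightL {x y q z q' z'} (hq : ¬ M.isFinalState q) (h : M.δ q z = (q', z', false)) :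
      M.Yields (Sum.inl x, Sum.inl y, Sum.inr (q, z)) (Sum.inr (q', y))
  | headRightR {x y q z q' z'} (hq : ¬ M.isFinalState q) (h : M.δ q z = (q', z', true)) :
      M.Yields (Sum.inl x, Sum.inl y, Sum.inr (q, z)) (Sum.inl y)
  | plain {x y z} : M.Yields (Sum.inl x, Sum.inl y, Sum.inl z) (Sum.inl y)

/-- `C : ℤ → Δ` is a configuration: finitely many non-blanks and exactly one head symbol. -/
def TM.IsConfig (M : TM) (C : ℤ → M.Sym) : Prop :=
  {j : ℤ | C j ≠ Sum.inl M.blank}.Finite ∧ ∃! j : ℤ, ∃ p : M.Q × M.Γ, C j = Sum.inr p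

/-- A configuration is final if its head symbol carries the accepting or rejecting state. -/
def TM.IsFinalConfig (M : TM) (C : ℤ → M.Sym) : Prop :=
  ∃ (j : ℤ) (q : M.Q) (x : M.Γ), C j = Sum.inr (q, x) ∧ M.isFinalState q

/-- The successor relation on configurations: `C ⊢ C'` iff locally everywhere. -/
def TM.ConfigStep (M : TM) (C C' : ℤ → M.Sym) : Prop :=
  ∀ j : ℤ, M.Yields (C (j - 1), C j, C (j + 1)) (C' j)
/-- The initial configuration `C₀^w` for input word `w`. -/
noncomputable def TM.initConfig (M : TM) (w : List M.Γ) : ℤ → M.Sym := fun j =>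
  if j = 0 then Sum.inr (M.q0, w.headD M.blank)
  else if 0 < j ∧ j < (w.length : ℤ) then Sum.inl (w.getD j.toNat M.blank)
  else Sum.inl M.blank

open Classical in
/-- The computation of `M` on `w` at the level of whole configurations:
`none` stands for ⊥ (the computation has already halted). -/
noncomputable def TM.compC (M : TM) (w : List M.Γ) : ℕ → Option (ℤ → M.Sym)
  | 0 => some (M.initConfig w)
  | n + 1 => (M.compC w n).bind fun C =>
      if M.IsFinalConfig C then none
      else if h : ∃ C', M.ConfigStep C C' then some h.choose else none

/-- `C^w_i(j)`, with `none` standing for ⊥. -/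
noncomputable def TM.comp (M : TM) (w : List M.Γ) (i : ℕ) (j : ℤ) : Option M.Sym :=
  (M.compC w i).map (fun C => C j)

/-- `w ∈ L(M)`: the computation reaches an accepting configuration. -/
def TM.Accepts (M : TM) (w : List M.Γ) : Prop :=
  ∃ (i : ℕ) (C : ℤ → M.Sym) (j : ℤ) (x : M.Γ),
    M.compC w i = some C ∧ C j = Sum.inr (M.qacc, x)

/-- States of the abstract game `G^M_w`. -/
inductive GSt (M : TM) where
  | s0 : GSt M
  | sF : GSt M
  | sym (β : M.Sym) (i : ℕ) (j : ℤ) : GSt M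
  | tri (t : M.Sym × M.Sym × M.Sym) (i : ℕ) (j : ℤ) : GSt M

/-- Transitions of the abstract game `G^M_w`. -/
inductive GTr (M : TM) (w : List M.Γ) : GSt M → GSt M → Prop
  | start (x : M.Γ) (i : ℕ) (j : ℤ) :
      GTr M w GSt.s0 (GSt.sym (Sum.inr (M.qacc, x)) i j)
  | expand {β t} (i : ℕ) (j : ℤ) (h : M.Yields t β) :
      GTr M w (GSt.sym β (i + 1) j) (GSt.tri t i j)
  | finish {β} (j : ℤ) (h : β = M.initConfig w j) :
      GTr M w (GSt.sym β 0 j) GSt.sF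
  | pick1 {t i j} : GTr M w (GSt.tri t i j) (GSt.sym t.1 i (j - 1))
  | pick2 {t i j} : GTr M w (GSt.tri t i j) (GSt.sym t.2.1 i j)
  | pick3 {t i j} : GTr M w (GSt.tri t i j) (GSt.sym t.2.2 i (j + 1))

/-- The abstract reachability game `G^M_w`: Eve owns `s₀`, `s_F` and the
symbol states; Adam owns the triple states; target `{s_F}`. -/
def Gm (M : TM) (w : List M.Γ) : RGame (GSt M) where
  eve := {s | match s with | GSt.tri _ _ _ => False | _ => True}
  trans := GTr M w
  target := {GSt.sF}

namespace RGame
variable {V : Type} (g : RGame V)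

inductive Win (g : RGame V) : V → Prop
  | base {s} : s ∈ g.target → g.Win s
  | eveS {s t} : s ∈ g.eve → g.trans s t → g.Win t → g.Win s
  | adamS {s} : s ∉ g.eve → (∃ t, g.trans s t) → (∀ t, g.trans s t → g.Win t) → g.Win s

lemma W_eq (o : Ordinal.{0}) :
    g.W o = if o = 0 then g.target else
      let Wlt : Set V := ⋃ o' : {x : Ordinal.{0} // x < o}, g.W o'.1
      {s | s ∉ Wlt ∧ ((s ∈ g.eve ∧ ∃ t, g.trans s t ∧ t ∈ Wlt) ∨
        (s ∉ g.eve ∧ (∃ t, g.trans s t) ∧ ∀ t, g.trans s t → t ∈ Wlt))} := by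
  rw [RGame.W]

lemma win_of_mem_W : ∀ o : Ordinal.{0}, ∀ s, s ∈ g.W o → g.Win s := by
  intro o
  induction o using Ordinal.induction with
  | _ o IH =>
    intro s hs
    rw [g.W_eq] at hs
    by_cases h0 : o = 0
    · rw [if_pos h0] at hs; exact Win.base hs
    · rw [if_neg h0] at hs
      obtain ⟨-, h⟩ := hs
      rcases h with ⟨he, t, ht, hmem⟩ | ⟨hne, hex, hall⟩
      · simp only [Set.mem_iUnion] at hmem
        obtain ⟨⟨o', ho'⟩, htm⟩ := hmem
        exact Win.eveS he ht (IH o' ho' t htm)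
      · refine Win.adamS hne hex fun t ht => ?_
        have := hall t ht
        simp only [Set.mem_iUnion] at this
        obtain ⟨⟨o', ho'⟩, htm⟩ := this
        exact IH o' ho' t htm

lemma target_subset_winE : g.target ⊆ g.WinE := fun s hs =>
  Set.mem_iUnion.2 ⟨0, by rw [g.W_eq]; simpa⟩

lemma winE_eve {s t : V} (he : s ∈ g.eve) (ht : g.trans s t) (h : t ∈ g.WinE) :
    s ∈ g.WinE := by
  obtain ⟨o, hto⟩ := Set.mem_iUnion.1 h
  by_cases hs : s ∈ ⋃ o' : {x : Ordinal.{0} // x < o + 1}, g.W o'.1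
  · simp only [Set.mem_iUnion] at hs
    obtain ⟨⟨o', _⟩, h'⟩ := hs
    exact Set.mem_iUnion.2 ⟨o', h'⟩
  · refine Set.mem_iUnion.2 ⟨o + 1, ?_⟩
    rw [g.W_eq, if_neg (by rw [Ordinal.add_one_eq_succ]; exact Ordinal.succ_ne_zero _)]
    refine ⟨hs, Or.inl ⟨he, t, ht, ?_⟩⟩
    exact Set.mem_iUnion.2 ⟨⟨o, by exact lt_add_one o⟩, hto⟩

lemma winE_adam {s : V} (hne : s ∉ g.eve) (hex : ∃ t, g.trans s t)
    (hall : ∀ t, g.trans s t → t ∈ g.WinE) : s ∈ g.WinE := by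
  choose f hf using fun t : {t // g.trans s t} => Set.mem_iUnion.1 (hall t.1 t.2)
  set o : Ordinal.{0} := (⨆ t, f t) + 1 with ho
  have hlt : ∀ t : {t // g.trans s t}, f t < o := fun t =>
    lt_of_le_of_lt (le_ciSup (Ordinal.bddAbove_range f) t) (lt_add_one _)
  by_cases hs : s ∈ ⋃ o' : {x : Ordinal.{0} // x < o}, g.W o'.1
  · simp only [Set.mem_iUnion] at hs
    obtain ⟨⟨o', _⟩, h'⟩ := hs
    exact Set.mem_iUnion.2 ⟨o', h'⟩
  · refine Set.mem_iUnion.2 ⟨o, ?_⟩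
    rw [g.W_eq, if_neg (by rw [ho, Ordinal.add_one_eq_succ]; exact Ordinal.succ_ne_zero _)]
    refine ⟨hs, Or.inr ⟨hne, hex, fun t ht => ?_⟩⟩
    exact Set.mem_iUnion.2 ⟨⟨f ⟨t, ht⟩, hlt _⟩, hf ⟨t, ht⟩⟩

lemma mem_winE_iff {s : V} : s ∈ g.WinE ↔ g.Win s := by
  constructor
  · intro h
    obtain ⟨o, h⟩ := Set.mem_iUnion.1 h
    exact g.win_of_mem_W o s h
  · intro h
    induction h with
    | base h => exact g.target_subset_winE h
    | eveS he ht _ ih => exact g.winE_eve he ht ih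
    | adamS hne hex _ ih => exact g.winE_adam hne hex ih

end RGame

namespace TM
variable {M : TM}

/-- `C` has a unique head, at `p`, carrying `(q, x)`. -/
def Good (M : TM) (C : ℤ → M.Sym) (p : ℤ) (q : M.Q) (x : M.Γ) : Prop :=
  C p = Sum.inr (q, x) ∧ ∀ j, j ≠ p → ∃ y, C j = Sum.inl y

lemma yields_unique {t : M.Sym × M.Sym × M.Sym} {β β' : M.Sym}
    (h : M.Yields t β) (h' : M.Yields t β') : β = β' := by
  cases h <;> cases h' <;> (try rfl) <;> simp_all <;> rfl

lemma good_initConfig (w : List M.Γ) :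
    Good M (M.initConfig w) 0 M.q0 (w.headD M.blank) := by
  constructor
  · simp [TM.initConfig]; rfl
  · intro j hj
    simp only [TM.initConfig, if_neg hj]
    by_cases h : 0 < j ∧ j < (w.length : ℤ)
    · exact ⟨_, (if_neg hj).trans (if_pos h)⟩
    · exact ⟨_, (if_neg hj).trans (if_neg h)⟩

lemma step_exists {C : ℤ → M.Sym} {p q x} (hg : Good M C p q x)
    (hnf : ¬ M.isFinalState q) : ∃ C', M.ConfigStep C C' := by
  obtain ⟨hp, hrest⟩ := hg
  rcases hδ : M.δ q x with ⟨q', x', d⟩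
  have htot : ∀ k : ℤ, ∃ β, M.Yields (C (k - 1), C k, C (k + 1)) β := by
    intro k
    by_cases h1 : k - 1 = p
    · obtain ⟨y, hy⟩ := hrest k (by omega)
      obtain ⟨z, hz⟩ := hrest (k + 1) (by omega)
      rw [hy, hz, h1, hp]
      cases d
      · exact ⟨_, Yields.headLeftL hnf hδ⟩
      · exact ⟨_, Yields.headLeftR hnf hδ⟩
    · by_cases h2 : k = p
      · obtain ⟨y, hy⟩ := hrest (k - 1) (by omega)
        obtain ⟨z, hz⟩ := hrest (k + 1) (by omega)
        rw [hy, hz, h2, hp]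
        exact ⟨_, Yields.headMid hnf hδ⟩
      · by_cases h3 : k + 1 = p
        · obtain ⟨y, hy⟩ := hrest (k - 1) (by omega)
          obtain ⟨z, hz⟩ := hrest k (by omega)
          rw [hy, hz, h3, hp]
          cases d
          · exact ⟨_, Yields.headRightL hnf hδ⟩
          · exact ⟨_, Yields.headRightR hnf hδ⟩
        · obtain ⟨a, ha⟩ := hrest (k - 1) h1
          obtain ⟨b, hb⟩ := hrest k h2
          obtain ⟨c, hc⟩ := hrest (k + 1) h3
          rw [ha, hb, hc]
          exact ⟨_, Yields.plain⟩
  exact ⟨fun k => (htot k).choose, fun k => (htot k).choose_spec⟩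

lemma yields_inr_inv {a b c : M.Sym} {q : M.Q} {y : M.Γ}
    (h : M.Yields (a, b, c) (Sum.inr (q, y))) :
    (∃ q₀ x₀ x', a = Sum.inr (q₀, x₀) ∧ b = Sum.inl y ∧
        M.δ q₀ x₀ = (q, x', true) ∧ ¬ M.isFinalState q₀) ∨
    (∃ q₀ z₀ z', c = Sum.inr (q₀, z₀) ∧ b = Sum.inl y ∧
        M.δ q₀ z₀ = (q, z', false) ∧ ¬ M.isFinalState q₀) := by
  cases h with
  | headLeftR hq hd => exact Or.inl ⟨_, _, _, rfl, rfl, hd, hq⟩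
  | headRightL hq hd => exact Or.inr ⟨_, _, _, rfl, rfl, hd, hq⟩

lemma step_good {C C' : ℤ → M.Sym} {p q x q' x' d} (hg : Good M C p q x)
    (hδ : M.δ q x = (q', x', d)) (hs : M.ConfigStep C C') :
    ∃ p' q'' y, Good M C' p' q'' y := by
  obtain ⟨hp, hrest⟩ := hg
  obtain ⟨p', hp'⟩ : ∃ p' : ℤ, p' = if d then p + 1 else p - 1 := ⟨_, rfl⟩
  have hother : ∀ j, j ≠ p' → ∃ z, C' j = Sum.inl z := by
    intro j hj
    have h := hs j
    cases hC : C' j with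
    | inl z => exact ⟨z, rfl⟩
    | inr pr =>
      exfalso
      obtain ⟨q₂, y₂⟩ := pr
      rw [hC] at h
      rcases yields_inr_inv h with ⟨q₀, x₀, x₁, ha, hb, hd0, hq0⟩ |
        ⟨q₀, z₀, z₁, hc, hb, hd0, hq0⟩
      · have hjp : j - 1 = p := by
          by_contra hne
          obtain ⟨y₁, hy₁⟩ := hrest (j - 1) hne
          rw [hy₁] at ha; exact absurd ha (by simp)
        rw [hjp, hp] at ha
        injection ha with ha2
        injection ha2 with e1 e2
        subst e1; subst e2
        rw [hδ] at hd0
        injection hd0 with f1 f2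
        injection f2 with f3 f4
        subst f4
        simp only [if_true] at hp'
        exact hj (by omega)
      · have hjp : j + 1 = p := by
          by_contra hne
          obtain ⟨y₁, hy₁⟩ := hrest (j + 1) hne
          rw [hy₁] at hc; exact absurd hc (by simp)
        rw [hjp, hp] at hc
        injection hc with hc2
        injection hc2 with e1 e2
        subst e1; subst e2
        rw [hδ] at hd0
        injection hd0 with f1 f2
        injection f2 with f3 f4
        subst f4
        simp only [Bool.false_eq_true, if_false] at hp'
        exact hj (by omega)
  cases d with
  | true =>
    have hpp : p' = p + 1 := by simpa using hp'
    subst hpp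
    obtain ⟨y, hy⟩ := hrest (p + 1) (by omega)
    obtain ⟨z, hz⟩ := hrest (p + 2) (by omega)
    have h := hs (p + 1)
    rw [show p + 1 - 1 = p by ring, show p + 1 + 1 = p + 2 by ring, hp, hy, hz] at h
    cases hC : C' (p + 1) with
    | inl z' =>
      rw [hC] at h
      cases h with
      | headLeftL hq hd => rw [hδ] at hd; simp at hd
    | inr pr =>
      obtain ⟨q₂, y₂⟩ := pr
      exact ⟨p + 1, q₂, y₂, hC, hother⟩
  | false =>
    have hpp : p' = p - 1 := by simpa using hp'
    subst hpp
    obtain ⟨y, hy⟩ := hrest (p - 2) (by omega)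
    obtain ⟨z, hz⟩ := hrest (p - 1) (by omega)
    have h := hs (p - 1)
    rw [show p - 1 - 1 = p - 2 by ring, show p - 1 + 1 = p by ring, hp, hy, hz] at h
    cases hC : C' (p - 1) with
    | inl z' =>
      rw [hC] at h
      cases h with
      | headRightR hq hd => rw [hδ] at hd; simp at hd
    | inr pr =>
      obtain ⟨q₂, y₂⟩ := pr
      exact ⟨p - 1, q₂, y₂, hC, hother⟩

lemma compC_zero (w : List M.Γ) : M.compC w 0 = some (M.initConfig w) := rfl

open Classical in
lemma compC_succ (w : List M.Γ) (i : ℕ) :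
    M.compC w (i + 1) = (M.compC w i).bind fun C =>
      if M.IsFinalConfig C then none
      else if h : ∃ C', M.ConfigStep C C' then some h.choose else none := by
  rw [TM.compC]

lemma compC_good (w : List M.Γ) :
    ∀ i C, M.compC w i = some C → ∃ p q x, Good M C p q x := by
  intro i
  induction i with
  | zero =>
    intro C hC
    rw [compC_zero] at hC
    injection hC with hC
    subst hC
    exact ⟨0, _, _, good_initConfig w⟩
  | succ i IH =>
    intro C hC
    rw [compC_succ] at hC
    cases hC' : M.compC w i with
    | none => rw [hC'] at hC; simp at hC
    | some C' =>
      rw [hC'] at hC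
      simp only [Option.bind_some] at hC
      split_ifs at hC with h1 h2
      injection hC with hC
      subst hC
      obtain ⟨p, q, x, hg⟩ := IH C' hC'
      rcases hδ : M.δ q x with ⟨q', x', d⟩
      exact step_good hg hδ h2.choose_spec

lemma certified_correct (w : List M.Γ) :
    ∀ i C, M.compC w i = some C → ∀ β j, (Gm M w).Win (GSt.sym β i j) → C j = β := by
  intro i
  induction i with
  | zero =>
    intro C hC β j hw
    rw [compC_zero] at hC
    injection hC with hC
    subst hC
    cases hw with
    | base h => simp [Gm] at h
    | adamS hne _ _ => exact absurd trivial hne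
    | eveS he ht hwt =>
      cases ht with
      | finish _ h => exact h.symm
  | succ i IH =>
    intro C hC β j hw
    cases hw with
    | base h => simp [Gm] at h
    | adamS hne _ _ => exact absurd trivial hne
    | eveS he ht hwt =>
      cases ht with
      | expand i j hY =>
        rename_i t
        cases hwt with
        | base h => simp [Gm] at h
        | eveS he' ht' _ => exact absurd he' (by simp [Gm])
        | adamS _ _ hall =>
          obtain ⟨t1, t2, t3⟩ := t
          have h1 := hall _ GTr.pick1
          have h2 := hall _ GTr.pick2
          have h3 := hall _ GTr.pick3
          rw [compC_succ] at hC
          cases hC' : M.compC w i with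
          | none => rw [hC'] at hC; simp at hC
          | some C' =>
            rw [hC'] at hC
            simp only [Option.bind_some] at hC
            split_ifs at hC with hf hex
            injection hC with hC
            subst hC
            have hs : M.ConfigStep C' hex.choose := hex.choose_spec
            have e1 := IH C' hC' t1 (j - 1) h1
            have e2 := IH C' hC' t2 j h2
            have e3 := IH C' hC' t3 (j + 1) h3
            have hY' := hs j
            rw [e1, e2, e3] at hY'
            exact yields_unique hY' hY

lemma certified_head (w : List M.Γ) :
    ∀ i j q x, (Gm M w).Win (GSt.sym (Sum.inr (q, x)) i j) →
      ∃ C, M.compC w i = some C ∧ C j = Sum.inr (q, x) := by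
  intro i
  induction i with
  | zero =>
    intro j q x hw
    cases hw with
    | base h => simp [Gm] at h
    | adamS hne _ _ => exact absurd trivial hne
    | eveS he ht hwt =>
      cases ht with
      | finish _ h => exact ⟨_, compC_zero w, h.symm⟩
  | succ i IH =>
    intro j q x hw
    cases hw with
    | base h => simp [Gm] at h
    | adamS hne _ _ => exact absurd trivial hne
    | eveS he ht hwt =>
      cases ht with
      | expand i j hY =>
        rename_i t
        cases hwt with
        | base h => simp [Gm] at h
        | eveS he' ht' _ => exact absurd he' (by simp [Gm])
        | adamS _ _ hall =>
          obtain ⟨t1, t2, t3⟩ := t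
          have h1 := hall _ GTr.pick1
          have h2 := hall _ GTr.pick2
          have h3 := hall _ GTr.pick3
          rcases yields_inr_inv hY with ⟨q₀, x₀, x₁, ha, hb, hd0, hq0⟩ |
            ⟨q₀, z₀, z₁, hc, hb, hd0, hq0⟩
          · rw [ha] at h1
            obtain ⟨C', hC', hCj⟩ := IH (j - 1) q₀ x₀ h1
            obtain ⟨p, q₁, y₁, hg⟩ := compC_good w i C' hC'
            have hpj : p = j - 1 := by
              by_contra hne
              obtain ⟨y₂, hy₂⟩ := hg.2 (j - 1) (fun h => hne h.symm)
              rw [hy₂] at hCj; exact absurd hCj (by simp)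
            subst hpj
            have hgood : Good M C' (j - 1) q₀ x₀ := ⟨hCj, hg.2⟩
            have hnf : ¬ M.IsFinalConfig C' := by
              rintro ⟨j₂, q₂, x₂, hj₂, hfin⟩
              by_cases hj : j₂ = j - 1
              · rw [hj, hCj] at hj₂
                injection hj₂ with hj₂
                injection hj₂ with hq₂ hx₂
                exact hq0 (hq₂ ▸ hfin)
              · obtain ⟨y₂, hy₂⟩ := hg.2 j₂ hj
                rw [hy₂] at hj₂; exact absurd hj₂ (by simp)
            have hex := step_exists hgood hq0
            have hcomp : M.compC w (i + 1) = some hex.choose := by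
              rw [compC_succ, hC']
              simp only [Option.bind_some]
              rw [if_neg hnf, dif_pos hex]
            have hs : M.ConfigStep C' hex.choose := hex.choose_spec
            have e2 := certified_correct w i C' hC' t2 j h2
            have e3 := certified_correct w i C' hC' t3 (j + 1) h3
            have hYj := hs j
            rw [e2, e3, hCj, ← ha] at hYj
            exact ⟨hex.choose, hcomp, yields_unique hYj hY⟩
          · rw [hc] at h3
            obtain ⟨C', hC', hCj⟩ := IH (j + 1) q₀ z₀ h3
            obtain ⟨p, q₁, y₁, hg⟩ := compC_good w i C' hC'
            have hpj : p = j + 1 := by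
              by_contra hne
              obtain ⟨y₂, hy₂⟩ := hg.2 (j + 1) (fun h => hne h.symm)
              rw [hy₂] at hCj; exact absurd hCj (by simp)
            subst hpj
            have hgood : Good M C' (j + 1) q₀ z₀ := ⟨hCj, hg.2⟩
            have hnf : ¬ M.IsFinalConfig C' := by
              rintro ⟨j₂, q₂, x₂, hj₂, hfin⟩
              by_cases hj : j₂ = j + 1
              · rw [hj, hCj] at hj₂
                injection hj₂ with hj₂
                injection hj₂ with hq₂ hx₂
                exact hq0 (hq₂ ▸ hfin)
              · obtain ⟨y₂, hy₂⟩ := hg.2 j₂ hj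
                rw [hy₂] at hj₂; exact absurd hj₂ (by simp)
            have hex := step_exists hgood hq0
            have hcomp : M.compC w (i + 1) = some hex.choose := by
              rw [compC_succ, hC']
              simp only [Option.bind_some]
              rw [if_neg hnf, dif_pos hex]
            have hs : M.ConfigStep C' hex.choose := hex.choose_spec
            have e1 := certified_correct w i C' hC' t1 (j - 1) h1
            have e2 := certified_correct w i C' hC' t2 j h2
            have hYj := hs j
            rw [e1, e2, hCj, ← hc] at hYj
            exact ⟨hex.choose, hcomp, yields_unique hYj hY⟩

lemma comp_win (w : List M.Γ) :
    ∀ i C, M.compC w i = some C → ∀ j, (Gm M w).Win (GSt.sym (C j) i j) := by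
  intro i
  induction i with
  | zero =>
    intro C hC j
    rw [compC_zero] at hC
    injection hC with hC
    subst hC
    exact RGame.Win.eveS trivial (GTr.finish j rfl) (RGame.Win.base rfl)
  | succ i IH =>
    intro C hC j
    rw [compC_succ] at hC
    cases hC' : M.compC w i with
    | none => rw [hC'] at hC; simp at hC
    | some C' =>
      rw [hC'] at hC
      simp only [Option.bind_some] at hC
      split_ifs at hC with hf hex
      injection hC with hC
      subst hC
      have hs : M.ConfigStep C' hex.choose := hex.choose_spec
      refine RGame.Win.eveS trivial (GTr.expand i j (hs j)) ?_
      refine RGame.Win.adamS (fun h => h) ⟨_, GTr.pick2⟩ ?_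
      intro t ht
      cases ht with
      | pick1 => exact IH C' hC' (j - 1)
      | pick2 => exact IH C' hC' j
      | pick3 => exact IH C' hC' (j + 1)
end TM

/-- in the abstract game `G^M_w`, the initial state `s₀` belongs
to Eve's winning region iff `w ∈ L(M)`. -/
theorem s0_winning_iff_accepts (M : TM) (w : List M.Γ) :
    GSt.s0 ∈ (Gm M w).WinE ↔ M.Accepts w := by
  rw [RGame.mem_winE_iff]
  constructor
  · intro h
    cases h with
    | base h => simp [Gm] at h
    | adamS hne _ _ => exact absurd trivial hne
    | eveS he ht hwt =>
      cases ht with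
      | start x i j =>
        obtain ⟨C, hC, hCj⟩ := TM.certified_head w i j M.qacc x hwt
        exact ⟨i, C, j, x, hC, hCj⟩
  · rintro ⟨i, C, j, x, hC, hCj⟩
    have hwin := TM.comp_win w i C hC j
    rw [hCj] at hwin
    exact RGame.Win.eveS trivial (GTr.start x i j) hwin
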